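/- arXiv:1907.09696 — 3 statements merged into one kernel-verified Lean document; each statement's English description precedes it below -/
import Mathlib

section
/- Given m data points (x₁,y₁),…,(x_m,y_m) in ℝ^{d}×ℝ and a vector w with w·x₁ < w·x₂ < ⋯ < w·x_m, define recursively N(x;0) = y₁ and N(x;j) = N(x;j−1) + c_j·φ(w·(x − x_j)) with c_j = (y_{j+1} − N(x_{j+1};j−1))/(w·(x_{j+1} − x_j)) for j = 1,…,m−1, where φ(t) = max(t,0). Then the shallow ReLU network N(·;m−1) of width m−1 interpolates all data: N(x_j;m−1) = y_j for every j = 1,…,m. -/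
open Metric

theorem shallow_relu_interpolation
    (d m : ℕ) (hm : 1 ≤ m)
    (x : ℕ → EuclideanSpace ℝ (Fin d)) (y : ℕ → ℝ)
    (w : EuclideanSpace ℝ (Fin d))
    (hw : ∀ i j : ℕ, i < j → j < m → (inner ℝ w (x i) : ℝ) < inner ℝ w (x j))
    (N : ℕ → EuclideanSpace ℝ (Fin d) → ℝ) (c : ℕ → ℝ)
    (hN0 : ∀ v, N 0 v = y 0)
    (hc : ∀ j : ℕ, 1 ≤ j → j ≤ m - 1 →
      c j = (y j - N (j - 1) (x j)) / (inner ℝ w (x j - x (j - 1)) : ℝ))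
    (hNrec : ∀ j : ℕ, 1 ≤ j → j ≤ m - 1 →
      ∀ v, N j v = N (j - 1) v + c j * max (inner ℝ w (v - x (j - 1)) : ℝ) 0) :
    ∀ j : ℕ, j < m → N (m - 1) (x j) = y j := by
  have key : ∀ k, k ≤ m - 1 → ∀ j, j ≤ k → N k (x j) = y j := by
    intro k
    induction k with
    | zero =>
      intro _ j hj
      interval_cases j
      exact hN0 (x 0)
    | succ n ih =>
      intro hk j hj
      have hn : n ≤ m - 1 := by omega
      have hnm : n + 1 < m := by omega
      have hrec := hNrec (n + 1) (by omega) hk (x j)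
      simp only [Nat.add_sub_cancel] at hrec
      rcases Nat.lt_or_ge j (n + 1) with hjn | hjn
      · have hj' : j ≤ n := by omega
        have hle : (inner ℝ w (x j - x n) : ℝ) ≤ 0 := by
          rw [inner_sub_right]
          rcases Nat.lt_or_ge j n with h | h
          · have := hw j n h (by omega)
            linarith
          · have : j = n := by omega
            simp [this]
        rw [hrec, max_eq_right hle, ih hn j hj']
        ring
      · have hj' : j = n + 1 := by omega
        subst hj'
        have hpos : (0 : ℝ) < inner ℝ w (x (n + 1) - x n) := by
          rw [inner_sub_right]
          have := hw n (n + 1) (Nat.lt_succ_self n) hnm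
          linarith
        have hcv := hc (n + 1) (by omega) hk
        simp only [Nat.add_sub_cancel] at hcv
        rw [hrec, max_eq_left hpos.le, hcv,
          div_mul_cancel₀ _ (ne_of_gt hpos)]
        ring
  intro j hj
  exact key (m - 1) le_rfl j (by omega)
end

section
/- With p̂_d(r) = (1/√π)·(Γ((d+1)/2)/Γ(d/2)) · ∫₀^{α_r} (sin u)^{d-1} du and α_r = arctan(1/r), r > 0, one has the bounds (1/(π d))(sin α_r)^d ≤ p̂_d(r) ≤ √(d/(2π)) · α_r · (sin α_r)^{d-1}, and also p̂_d(r) < 1/2. -/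
open Real intervalIntegral

private lemma gamma_sin_int (n : ℕ) :
    Real.Gamma ((n + 2) / 2) * ∫ x in (0:ℝ)..π, Real.sin x ^ n =
      Real.sqrt π * Real.Gamma ((n + 1) / 2) := by
  induction n using Nat.twoStepInduction with
  | zero =>
    norm_num [Real.Gamma_one, Real.Gamma_one_half_eq, Real.mul_self_sqrt pi_pos.le]
  | one =>
    have h32 : Real.Gamma (((1:ℕ) + 2) / 2 : ℝ) = Real.sqrt π / 2 := by
      have : (((1:ℕ):ℝ) + 2) / 2 = 1/2 + 1 := by norm_num
      rw [this, Real.Gamma_add_one (by norm_num), Real.Gamma_one_half_eq]; ring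
    rw [h32]
    norm_num [Real.Gamma_one]
  | more n ih _ =>
    have hJ : (∫ x in (0:ℝ)..π, Real.sin x ^ (n + 2)) =
        ((n:ℝ) + 1) / ((n:ℝ) + 2) * ∫ x in (0:ℝ)..π, Real.sin x ^ n := by
      rw [integral_sin_pow]; simp
    have hne : ((n:ℝ) + 2) / 2 ≠ 0 := by positivity
    have hne1 : ((n:ℝ) + 1) / 2 ≠ 0 := by positivity
    have e4 : ((((n+2):ℕ):ℝ) + 2) / 2 = ((n:ℝ) + 2) / 2 + 1 := by push_cast; ring
    have e3 : ((((n+2):ℕ):ℝ) + 1) / 2 = ((n:ℝ) + 1) / 2 + 1 := by push_cast; ring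
    rw [e4, e3, hJ, Real.Gamma_add_one hne, Real.Gamma_add_one hne1]
    have h2 : ((n:ℝ)+2) ≠ 0 := by positivity
    field_simp
    linear_combination ih

private lemma sin_int_symm (n : ℕ) :
    (∫ x in (0:ℝ)..π, Real.sin x ^ n) = 2 * ∫ x in (0:ℝ)..(π/2), Real.sin x ^ n := by
  have hint : ∀ a b : ℝ, IntervalIntegrable (fun x => Real.sin x ^ n) MeasureTheory.volume a b :=
    fun a b => (continuous_sin.pow n).intervalIntegrable a b
  have hsplit := integral_add_adjacent_intervals (hint 0 (π/2)) (hint (π/2) π)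
  have h := intervalIntegral.integral_comp_sub_left (a := 0) (b := π/2) (fun x => Real.sin x ^ n) π
  simp only [Real.sin_pi_sub, sub_zero, sub_half] at h
  linarith [hsplit, h]

private lemma wallis_prod (n : ℕ) :
    (∫ x in (0:ℝ)..π, Real.sin x ^ n) * (∫ x in (0:ℝ)..π, Real.sin x ^ (n+1)) =
      2 * π / (n + 1) := by
  have h1 := gamma_sin_int n
  have h2 := gamma_sin_int (n + 1)
  have e1 : ((((n+1):ℕ):ℝ) + 2) / 2 = ((n:ℝ) + 1) / 2 + 1 := by push_cast; ring
  have e2 : ((((n+1):ℕ):ℝ) + 1) / 2 = ((n:ℝ) + 2) / 2 := by push_cast; ring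
  have hne1 : ((n:ℝ) + 1) / 2 ≠ 0 := by positivity
  rw [e1, e2, Real.Gamma_add_one hne1] at h2
  have hg1 : 0 < Real.Gamma (((n:ℝ) + 1) / 2) := Real.Gamma_pos_of_pos (by positivity)
  have hg2 : 0 < Real.Gamma (((n:ℝ) + 2) / 2) := Real.Gamma_pos_of_pos (by positivity)
  have hπ : Real.sqrt π * Real.sqrt π = π := Real.mul_self_sqrt pi_pos.le
  have hm : (Real.Gamma (((n:ℝ) + 2) / 2) * ∫ (x : ℝ) in (0:ℝ)..π, sin x ^ n) *
      (((n:ℝ) + 1) / 2 * Real.Gamma (((n:ℝ) + 1) / 2) * ∫ (x : ℝ) in (0:ℝ)..π, sin x ^ (n + 1)) =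
      (Real.sqrt π * Real.Gamma (((n:ℝ) + 1) / 2)) *
        (Real.sqrt π * Real.Gamma (((n:ℝ) + 2) / 2)) := by
    rw [h1, h2]
  have hkey : Real.Gamma (((n:ℝ) + 1) / 2) * Real.Gamma (((n:ℝ) + 2) / 2) *
      ((∫ x in (0:ℝ)..π, Real.sin x ^ n) * (∫ x in (0:ℝ)..π, Real.sin x ^ (n+1)) * ((n:ℝ)+1)) =
      Real.Gamma (((n:ℝ) + 1) / 2) * Real.Gamma (((n:ℝ) + 2) / 2) * (2 * π) := by
    linear_combination 2 * hm +
      2 * Real.Gamma (((n:ℝ) + 1) / 2) * Real.Gamma (((n:ℝ) + 2) / 2) * hπ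
  have := mul_left_cancel₀ (ne_of_gt (mul_pos hg1 hg2)) hkey
  have hn1 : ((n:ℝ) + 1) ≠ 0 := by positivity
  field_simp
  linarith [this]

theorem born_dead_probability_bounds (d : ℕ) (hd : 1 ≤ d) (r : ℝ) (hr : 0 < r) :
    letI αr : ℝ := Real.arctan (1 / r)
    letI p : ℝ := (1 / Real.sqrt π) * (Real.Gamma ((d + 1) / 2) / Real.Gamma (d / 2)) *
      ∫ u in (0:ℝ)..αr, (Real.sin u) ^ (d - 1)
    (1 / (π * d)) * (Real.sin αr) ^ d ≤ p ∧
    p ≤ Real.sqrt (d / (2 * π)) * αr * (Real.sin αr) ^ (d - 1) ∧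
    p < 1 / 2 := by
  obtain ⟨n, rfl⟩ : ∃ n, d = n + 1 := ⟨d - 1, (Nat.succ_pred_eq_of_pos hd).symm⟩
  set α := Real.arctan (1 / r) with hα_def
  have hα0 : 0 < α := by rw [← Real.arctan_zero]; exact Real.arctan_strictMono (by positivity)
  have hα2 : α < π / 2 := Real.arctan_lt_pi_div_two _
  have hint : ∀ a b : ℝ, IntervalIntegrable (fun x => Real.sin x ^ n) MeasureTheory.volume a b :=
    fun a b => (continuous_sin.pow n).intervalIntegrable a b
  set A := ∫ x in (0:ℝ)..α, Real.sin x ^ n with hA_def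
  set c := ∫ x in (0:ℝ)..(π/2), Real.sin x ^ n with hc_def
  set J := ∫ x in (0:ℝ)..π, Real.sin x ^ n with hJ_def
  have hJc : J = 2 * c := sin_int_symm n
  have hJpos : 0 < J := integral_sin_pow_pos n
  have hcpos : 0 < c := by linarith
  have s_def : Real.sin α = Real.sin α := rfl
  set s := Real.sin α with hs_def
  have hs0 : 0 < s := Real.sin_pos_of_pos_of_lt_pi hα0 (by linarith [pi_pos])
  have hs1 : s ≤ 1 := Real.sin_le_one α
  -- the prefactor equals 1 / J
  have hΓ1 : 0 < Real.Gamma (((n:ℝ) + 1) / 2) := Real.Gamma_pos_of_pos (by positivity)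
  have hsqπ : 0 < Real.sqrt π := Real.sqrt_pos.mpr pi_pos
  have hpre : (1 / Real.sqrt π) *
      (Real.Gamma (((((n+1):ℕ):ℝ) + 1) / 2) / Real.Gamma ((((n+1):ℕ):ℝ) / 2)) = 1 / J := by
    have h1 := gamma_sin_int n
    have e1 : ((((n+1):ℕ):ℝ) + 1) / 2 = ((n:ℝ) + 2) / 2 := by push_cast; ring
    have e2 : ((((n+1):ℕ):ℝ)) / 2 = ((n:ℝ) + 1) / 2 := by push_cast; ring
    rw [e1, e2]
    field_simp
    linear_combination h1
  -- lower bound on A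
  have hA_low : s ^ (n+1) / ((n:ℝ)+1) ≤ A := by
    have hcs : (∫ x in (0:ℝ)..α, Real.sin x ^ n * Real.cos x) = s ^ (n+1) / ((n:ℝ)+1) := by
      have h := integral_sin_pow_mul_cos_pow_odd (a := 0) (b := α) n 0
      simp only [mul_zero, zero_add, pow_one, pow_zero, mul_one, Real.sin_zero] at h
      rw [h, integral_pow]
      simp
      rfl
    rw [← hcs]
    apply intervalIntegral.integral_mono_on hα0.le
      (((continuous_sin.pow n).mul continuous_cos).intervalIntegrable 0 α) (hint 0 α)
    intro x hx
    have hsx : 0 ≤ Real.sin x := Real.sin_nonneg_of_nonneg_of_le_pi hx.1 (by linarith [hx.2, pi_pos])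
    exact mul_le_of_le_one_right (pow_nonneg hsx n) (Real.cos_le_one x)
  -- upper bound on A
  have hmono : ∀ x ∈ Set.Icc (0:ℝ) α, Real.sin x ≤ s := by
    intro x hx
    exact Real.strictMonoOn_sin.monotoneOn
      ⟨by linarith [hx.1, pi_pos], by linarith [hx.2]⟩
      ⟨by linarith [pi_pos], hα2.le⟩ hx.2
  have hA_high : A ≤ α * s ^ n := by
    have := intervalIntegral.integral_mono_on (a := 0) (b := α) hα0.le (hint 0 α)
      (_root_.intervalIntegrable_const (c := s ^ n))
      (fun x hx => pow_le_pow_left₀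
        (Real.sin_nonneg_of_nonneg_of_le_pi hx.1 (by linarith [hx.2, pi_pos])) (hmono x hx) n)
    simpa using this
  have hA_pos : 0 < A := lt_of_lt_of_le (by positivity) hA_low
  -- A < c
  have hAc : A < c := by
    have hsplit := integral_add_adjacent_intervals (hint 0 α) (hint α (π/2))
    have hpos : 0 < ∫ x in α..(π/2), Real.sin x ^ n := by
      apply intervalIntegral.intervalIntegral_pos_of_pos_on (hint α (π/2)) _ hα2
      intro x hx
      exact pow_pos (Real.sin_pos_of_pos_of_lt_pi (by linarith [hx.1])
        (by linarith [hx.2, pi_pos])) n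
    rw [hc_def, ← hsplit]
    linarith
  -- c ≤ π/2
  have hc_le : c ≤ π / 2 := by
    have := intervalIntegral.integral_mono_on (a := 0) (b := π/2) (by positivity)
      (hint 0 (π/2)) (_root_.intervalIntegrable_const (c := (1:ℝ)))
      (fun x hx => pow_le_one₀
        (Real.sin_nonneg_of_nonneg_of_le_pi hx.1 (by linarith [hx.2, pi_pos]))
        (Real.sin_le_one x))
    simpa using this
  -- c ≥ sqrt (π / (2(n+1)))
  have hc_ge : Real.sqrt (π / (2 * ((n:ℝ)+1))) ≤ c := by
    have hw := wallis_prod n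
    have hsym1 := sin_int_symm n
    have hsym2 := sin_int_symm (n+1)
    set c' := ∫ x in (0:ℝ)..(π/2), Real.sin x ^ (n+1) with hc'_def
    have hcc' : c * c' = π / (2 * ((n:ℝ)+1)) := by
      rw [hsym1, hsym2] at hw
      have hn1 : ((n:ℝ) + 1) ≠ 0 := by positivity
      field_simp at hw ⊢
      linarith
    have hc'c : c' ≤ c := by
      apply intervalIntegral.integral_mono_on (by positivity)
        ((continuous_sin.pow (n+1)).intervalIntegrable 0 (π/2)) (hint 0 (π/2))
      intro x hx
      exact pow_le_pow_of_le_one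
        (Real.sin_nonneg_of_nonneg_of_le_pi hx.1 (by linarith [hx.2, pi_pos]))
        (Real.sin_le_one x) (Nat.le_succ n)
    have hsq : π / (2 * ((n:ℝ)+1)) ≤ c ^ 2 := by nlinarith
    calc Real.sqrt (π / (2 * ((n:ℝ)+1))) ≤ Real.sqrt (c ^ 2) := Real.sqrt_le_sqrt hsq
      _ = c := Real.sqrt_sq hcpos.le
  -- 1/J ≤ sqrt((n+1)/(2π))
  have hsqrt_pos : 0 < Real.sqrt (π / (2 * ((n:ℝ)+1))) := Real.sqrt_pos.mpr (by positivity)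
  have hmul : Real.sqrt ((((n:ℝ))+1) / (2*π)) * Real.sqrt (π / (2 * ((n:ℝ)+1))) = 1/2 := by
    rw [← Real.sqrt_mul (by positivity)]
    have : (((n:ℝ))+1) / (2*π) * (π / (2 * ((n:ℝ)+1))) = (1/2)^2 := by
      have hπ : (π:ℝ) ≠ 0 := pi_pos.ne'
      have hn1 : ((n:ℝ) + 1) ≠ 0 := by positivity
      field_simp
    rw [this, Real.sqrt_sq (by norm_num)]
  have hJ_inv : 1 / J ≤ Real.sqrt ((((n:ℝ))+1) / (2*π)) := by
    rw [div_le_iff₀ hJpos, hJc]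
    calc (1:ℝ) = 2 * (Real.sqrt ((((n:ℝ))+1) / (2*π)) * Real.sqrt (π / (2 * ((n:ℝ)+1)))) := by
          rw [hmul]; norm_num
      _ ≤ Real.sqrt ((((n:ℝ))+1) / (2*π)) * (2 * c) := by
          have := mul_le_mul_of_nonneg_left hc_ge (Real.sqrt_nonneg ((((n:ℝ))+1) / (2*π)))
          nlinarith
  refine ⟨?_, ?_, ?_⟩
  all_goals simp only [Nat.add_sub_cancel, hpre]
  · -- lower bound
    have e : (1 / (π * (((n+1):ℕ):ℝ))) * s ^ (n+1) = (s ^ (n+1) / ((n:ℝ)+1)) / π := by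
      push_cast
      field_simp
    rw [e]
    calc (s ^ (n+1) / ((n:ℝ)+1)) / π ≤ A / J := by
          apply div_le_div₀ hA_pos.le hA_low hJpos (by linarith)
      _ = 1 / J * A := by ring
  · -- upper bound
    have h1 : 1 / J * A ≤ 1 / J * (α * s ^ n) :=
      mul_le_mul_of_nonneg_left hA_high (by positivity)
    have h2 : 1 / J * (α * s ^ n) ≤ Real.sqrt ((((n:ℝ))+1) / (2*π)) * (α * s ^ n) :=
      mul_le_mul_of_nonneg_right hJ_inv (by positivity)
    have e : ((((n+1):ℕ):ℝ)) / (2*π) = (((n:ℝ))+1) / (2*π) := by push_cast; ring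
    rw [e]
    calc 1 / J * A ≤ Real.sqrt ((((n:ℝ))+1) / (2*π)) * (α * s ^ n) := le_trans h1 h2
      _ = Real.sqrt ((((n:ℝ))+1) / (2*π)) * α * s ^ n := by ring
  · -- p < 1/2
    rw [hJc]
    have : A / (2 * c) < 1 / 2 := by
      rw [div_lt_iff₀ (by linarith)]
      linarith
    calc 1 / (2*c) * A = A / (2*c) := by ring
      _ < 1/2 := this
end

section
/- Let (w, b) be uniform on the unit circle S¹ ⊂ ℝ², and let r > 0. Then P(w x + b < 0 for all x ∈ [−r, r]) = arctan(1/r)/π. -/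
open MeasureTheory Metric Real
open Set Filter Topology

noncomputable def cpt (θ : ℝ) : EuclideanSpace ℝ (Fin 2) := !₂[Real.cos θ, Real.sin θ]


lemma cpt_zero (θ : ℝ) : cpt θ 0 = Real.cos θ := rfl
lemma cpt_one (θ : ℝ) : cpt θ 1 = Real.sin θ := rfl

lemma dist_cpt (a b : ℝ) : dist (cpt a) (cpt b) = 2 * |Real.sin ((a - b) / 2)| := by
  rw [EuclideanSpace.dist_eq]
  have e : ∀ i, dist (cpt a i) (cpt b i) ^ 2 = (cpt a i - cpt b i)^2 := by
    intro i; rw [Real.dist_eq, sq_abs]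
  simp only [e]
  have : ∑ i, (cpt a i - cpt b i)^2 = (cos a - cos b)^2 + (sin a - sin b)^2 := by
    simp [Fin.sum_univ_two, cpt]
  rw [this]
  have h1 : (cos a - cos b)^2 + (sin a - sin b)^2 = 2 - 2 * cos (a - b) := by
    have := Real.cos_sub a b
    nlinarith [Real.sin_sq_add_cos_sq a, Real.sin_sq_add_cos_sq b]
  have h2 : 2 - 2 * cos (a - b) = (2 * |sin ((a - b) / 2)|)^2 := by
    have h3 := Real.sin_sq_eq_half_sub ((a - b)/2)
    rw [show 2 * ((a-b)/2) = a - b by ring] at h3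
    have := sq_abs (sin ((a-b)/2))
    nlinarith
  rw [h1, h2, Real.sqrt_sq (by positivity)]

lemma lipschitz_cpt : LipschitzWith 1 cpt := by
  apply LipschitzWith.of_dist_le_mul
  intro a b
  rw [dist_cpt, Real.dist_eq, NNReal.coe_one, one_mul]
  calc 2 * |sin ((a - b)/2)| ≤ 2 * |(a-b)/2| := by
        have := Real.abs_sin_le_abs (x := (a-b)/2); linarith
    _ = |a - b| := by rw [abs_div]; simp; ring

lemma arc_upper {a b : ℝ} :
    μH[(1:ℝ)] (cpt '' Set.Icc a b) ≤ ENNReal.ofReal (b - a) := by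
  have h := lipschitz_cpt.hausdorffMeasure_image_le (le_of_lt one_pos) (Set.Icc a b)
  simpa [MeasureTheory.hausdorffMeasure_real, Real.volume_Icc] using h

lemma sin_lin_le {x c : ℝ} (hx : 0 ≤ x) (hxc : x ≤ c) (hc : 0 < c) (hcπ : c ≤ π) :
    x / c * Real.sin c ≤ Real.sin x := by
  have hm1 : c ∈ Set.Icc 0 π := ⟨hc.le, hcπ⟩
  have hm2 : (0:ℝ) ∈ Set.Icc 0 π := ⟨le_rfl, Real.pi_pos.le⟩
  have ha : (0:ℝ) ≤ x / c := by positivity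
  have hb : (0:ℝ) ≤ 1 - x / c := by rw [sub_nonneg, div_le_one hc]; exact hxc
  have hab : x / c + (1 - x / c) = 1 := by ring
  have h := strictConcaveOn_sin_Icc.concaveOn.2 hm1 hm2 ha hb hab
  rw [smul_eq_mul, smul_eq_mul, smul_eq_mul, smul_eq_mul, Real.sin_zero, mul_zero, add_zero,
    add_zero, div_mul_cancel₀ _ hc.ne'] at h
  exact h

lemma arc_lower_chord {a b : ℝ} (hab : a ≤ b) (hb : b - a ≤ π) :
    ENNReal.ofReal (2 * Real.sin ((b - a) / 2)) ≤ μH[(1:ℝ)] (cpt '' Set.Icc a b) := by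
  rcases eq_or_lt_of_le hab with rfl | hlt
  · simp
  set δ := b - a with hδ
  have hδ0 : 0 < δ := by simp only [hδ]; linarith
  have hs : 0 < Real.sin (δ / 2) :=
    Real.sin_pos_of_pos_of_lt_pi (by linarith) (by linarith [Real.pi_pos])
  set Kr : ℝ := δ / (2 * Real.sin (δ / 2)) with hKr
  have hKr0 : 0 < Kr := by positivity
  set K : NNReal := ⟨Kr, hKr0.le⟩ with hK
  have hanti : AntilipschitzWith K
      ((cpt ∘ (Subtype.val)) : Set.Icc a b → EuclideanSpace ℝ (Fin 2)) := by
    apply AntilipschitzWith.of_le_mul_dist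
    rintro ⟨x, hx1, hx2⟩ ⟨y, hy1, hy2⟩
    simp only [Function.comp_apply, Subtype.dist_eq, Real.dist_eq, dist_cpt]
    have hxy : |x - y| ≤ δ := by
      rw [abs_le]; constructor <;> simp only [hδ] <;> linarith
    have h1 : |Real.sin ((x-y)/2)| = Real.sin (|x - y|/2) := by
      rcases le_total 0 (x - y) with h | h
      · rw [abs_of_nonneg h, abs_of_nonneg]
        exact Real.sin_nonneg_of_nonneg_of_le_pi (by linarith) (by linarith [Real.pi_pos])
      · rw [abs_of_nonpos h, show (x-y)/2 = -( -(x-y)/2) by ring, Real.sin_neg, abs_neg,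
          abs_of_nonneg]
        exact Real.sin_nonneg_of_nonneg_of_le_pi (by linarith) (by linarith [Real.pi_pos])
    have key : Real.sin (δ/2) * |x - y| ≤ δ * |Real.sin ((x - y)/2)| := by
      rw [h1]
      have hlin := sin_lin_le (x := |x-y|/2) (c := δ/2) (by positivity) (by linarith)
        (by linarith) (by linarith)
      calc Real.sin (δ/2) * |x - y| = (|x-y|/2 / (δ/2) * Real.sin (δ/2)) * δ := by
            field_simp
        _ ≤ Real.sin (|x-y|/2) * δ := mul_le_mul_of_nonneg_right hlin hδ0.le
        _ = δ * Real.sin (|x-y|/2) := by ring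
    have h2 : |x - y| ≤ δ * |Real.sin ((x - y)/2)| / Real.sin (δ/2) := by
      rw [le_div_iff₀ hs]; linarith
    calc |x - y| ≤ δ * |Real.sin ((x - y)/2)| / Real.sin (δ/2) := h2
      _ = Kr * (2 * |Real.sin ((x - y)/2)|) := by rw [hKr]; field_simp
      _ = (K : ℝ) * (2 * |Real.sin ((x - y)/2)|) := rfl
  -- now the measure chain
  have hiso : Isometry (Subtype.val : Set.Icc a b → ℝ) := isometry_subtype_coe
  have e1 : μH[(1:ℝ)] (Set.Icc a b) = μH[(1:ℝ)] (Set.univ : Set (Set.Icc a b)) := by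
    rw [← hiso.hausdorffMeasure_image (Or.inl one_pos.le), Set.image_univ,
      Subtype.range_coe]
  have e2 := hanti.le_hausdorffMeasure_image one_pos.le (Set.univ)
  rw [Set.image_univ] at e2
  have e3 : Set.range ((cpt ∘ (Subtype.val)) : Set.Icc a b → EuclideanSpace ℝ (Fin 2))
      = cpt '' Set.Icc a b := by
    rw [Set.range_comp, Subtype.range_coe]
  rw [e3] at e2
  have e4 : μH[(1:ℝ)] (Set.Icc a b) = ENNReal.ofReal δ := by
    rw [MeasureTheory.hausdorffMeasure_real, Real.volume_Icc]
  have e5 : ENNReal.ofReal δ ≤ (K : ENNReal) ^ (1:ℝ) * μH[(1:ℝ)] (cpt '' Set.Icc a b) := by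
    rw [← e4, e1]; exact e2
  rw [ENNReal.rpow_one] at e5
  have hKne : (K : ENNReal) ≠ 0 := by
    simp only [ne_eq, ENNReal.coe_eq_zero]
    intro h
    have : Kr = 0 := congrArg NNReal.toReal h
    exact hKr0.ne' this
  have hKnetop : (K : ENNReal) ≠ ⊤ := ENNReal.coe_ne_top
  have e6 : ENNReal.ofReal δ = (K : ENNReal) * ENNReal.ofReal (2 * Real.sin (δ/2)) := by
    rw [← ENNReal.ofReal_coe_nnreal]
    rw [← ENNReal.ofReal_mul (by positivity)]
    congr 1
    show δ = Kr * (2 * Real.sin (δ/2))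
    rw [hKr]; field_simp
  rw [e6] at e5
  exact (ENNReal.mul_le_mul_iff_right hKne hKnetop).mp e5

lemma cpt_inj {x y : ℝ} (h : cpt x = cpt y) (hxy : |x - y| < 2 * π) : x = y := by
  have hd : dist (cpt x) (cpt y) = 0 := by rw [h, dist_self]
  rw [dist_cpt] at hd
  have hs : Real.sin ((x - y) / 2) = 0 := by
    have h0 : |Real.sin ((x - y)/2)| = 0 := by linarith [abs_nonneg (Real.sin ((x-y)/2))]
    exact abs_eq_zero.mp h0
  rw [Real.sin_eq_zero_iff] at hs
  obtain ⟨n, hn⟩ := hs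
  have hπ := Real.pi_pos
  have habs : |(n : ℝ)| * π < π := by
    calc |(n : ℝ)| * π = |(n:ℝ) * π| := by rw [abs_mul, abs_of_nonneg hπ.le]
      _ = |(x - y)/2| := by rw [hn]
      _ = |x - y| / 2 := by rw [abs_div]; simp
      _ < π := by linarith
  have hn1 : |(n : ℝ)| < 1 := by nlinarith [abs_nonneg ((n:ℝ))]
  have hn0 : n = 0 := by
    have : |n| < 1 := by exact_mod_cast (by rwa [← Int.cast_abs] at hn1 : ((|n| : ℤ) : ℝ) < 1)
    exact Int.abs_lt_one_iff.mp this
  rw [hn0] at hn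
  simp at hn
  linarith

lemma singleton_null (x : EuclideanSpace ℝ (Fin 2)) : μH[(1:ℝ)] ({x} : Set (EuclideanSpace ℝ (Fin 2))) = 0 := by
  haveI := MeasureTheory.Measure.noAtoms_hausdorff (EuclideanSpace ℝ (Fin 2)) one_pos
  exact measure_singleton x

lemma measurable_arc (a b : ℝ) : MeasurableSet (cpt '' Set.Icc a b) :=
  (isCompact_Icc.image lipschitz_cpt.continuous).measurableSet

lemma arc_ge {a b : ℝ} (hab : a ≤ b) (hb : b - a ≤ π) (n : ℕ) (hn : 0 < n) :
    ENNReal.ofReal ((n:ℝ) * (2 * Real.sin ((b - a)/(2*(n:ℝ))))) ≤ μH[(1:ℝ)] (cpt '' Set.Icc a b) := by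
  have hπ := Real.pi_pos
  set δ := b - a with hδ
  have hδ0 : 0 ≤ δ := by simp only [hδ]; linarith
  have hn' : (0:ℝ) < n := by exact_mod_cast hn
  set t : ℕ → ℝ := fun k => a + k * (δ / n) with ht
  have htmono : ∀ (j k : ℕ), j ≤ k → t j ≤ t k := by
    intro j k hjk
    simp only [ht]
    have : (j:ℝ) ≤ k := by exact_mod_cast hjk
    have : (j:ℝ) * (δ/n) ≤ k * (δ/n) := by
      apply mul_le_mul_of_nonneg_right this (by positivity)
    linarith
  have htk : ∀ k, t (k+1) - t k = δ / n := by
    intro k; simp only [ht]; push_cast; ring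
  have hta : ∀ k, a ≤ t k := by
    intro k; simp only [ht]
    have : (0:ℝ) ≤ k * (δ/n) := by positivity
    linarith
  have htb : ∀ k, k ≤ n → t k ≤ b := by
    intro k hk
    have h1 : t k ≤ t n := htmono _ _ hk
    have h2 : t n = b := by
      have he : (n:ℝ) * (δ/n) = δ := by field_simp
      simp only [ht, he]; simp only [hδ]; ring
    linarith
  set B : ℕ → Set (EuclideanSpace ℝ (Fin 2)) :=
    fun k => (cpt '' Set.Icc (t k) (t (k+1))) \ {cpt (t (k+1))} with hB
  have hBmeas : ∀ k, MeasurableSet (B k) :=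
    fun k => (measurable_arc _ _).diff (measurableSet_singleton _)
  have hBsub : ∀ k, k + 1 ≤ n → B k ⊆ cpt '' Set.Icc a b := by
    intro k hk x hx
    obtain ⟨θ, hθ, rfl⟩ := hx.1
    exact ⟨θ, ⟨le_trans (hta k) hθ.1, le_trans hθ.2 (htb _ hk)⟩, rfl⟩
  have hBdisj : (↑(Finset.range n) : Set ℕ).Pairwise (Function.onFun Disjoint B) := by
    have key : ∀ j k, j < k → k < n → Disjoint (B j) (B k) := by
      intro j k hjk hkn
      rw [Set.disjoint_left]
      rintro x ⟨⟨θ₁, hθ₁, rfl⟩, hx1⟩ ⟨⟨θ₂, hθ₂, h2⟩, hx2⟩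
      have hθ₁ab : a ≤ θ₁ ∧ θ₁ ≤ b := ⟨le_trans (hta j) hθ₁.1, le_trans hθ₁.2 (htb _ (by omega))⟩
      have hθ₂ab : a ≤ θ₂ ∧ θ₂ ≤ b := ⟨le_trans (hta k) hθ₂.1, le_trans hθ₂.2 (htb _ (by omega))⟩
      have heq : θ₂ = θ₁ := by
        apply cpt_inj h2
        rw [abs_lt]; constructor <;> simp only [hδ] at hb ⊢ <;> nlinarith
      rw [heq] at hθ₂
      have h3 : t (j+1) ≤ t k := htmono _ _ (by omega)
      have h4 : θ₁ = t (j+1) := le_antisymm hθ₁.2 (le_trans h3 hθ₂.1)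
      exact hx1 (by rw [h4]; rfl)
    intro j hj k hk hjk
    simp only [Finset.coe_range, Set.mem_Iio] at hj hk
    rcases lt_or_gt_of_ne hjk with h | h
    · exact key j k h hk
    · exact (key k j h hj).symm
  have hsum : ∑ k ∈ Finset.range n, μH[(1:ℝ)] (B k) ≤ μH[(1:ℝ)] (cpt '' Set.Icc a b) := by
    rw [← measure_biUnion_finset hBdisj (fun k _ => hBmeas k)]
    apply measure_mono
    apply Set.iUnion₂_subset
    intro k hk
    exact hBsub k (by simpa using hk)
  have hBk : ∀ k, μH[(1:ℝ)] (B k) = μH[(1:ℝ)] (cpt '' Set.Icc (t k) (t (k+1))) := by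
    intro k
    exact measure_diff_null (singleton_null _)
  have hchord : ∀ k, ENNReal.ofReal (2 * Real.sin (δ/(2*n))) ≤ μH[(1:ℝ)] (B k) := by
    intro k
    rw [hBk k]
    have hdn : (0:ℝ) ≤ δ / n := by positivity
    have h1 : t k ≤ t (k+1) := htmono k (k+1) (Nat.le_succ k)
    have h2 : t (k+1) - t k ≤ π := by
      rw [htk k]
      have : δ/n ≤ δ := div_le_self hδ0 (by exact_mod_cast hn)
      linarith
    have h := arc_lower_chord h1 h2
    rw [htk k] at h
    have he : δ / ↑n / 2 = δ / (2*↑n) := by ring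
    rw [he] at h
    exact h
  calc ENNReal.ofReal ((n:ℝ) * (2 * Real.sin (δ/(2*n))))
      = ∑ _k ∈ Finset.range n, ENNReal.ofReal (2 * Real.sin (δ/(2*n))) := by
        rw [Finset.sum_const, Finset.card_range, nsmul_eq_mul,
          ← ENNReal.ofReal_natCast n, ← ENNReal.ofReal_mul (by positivity)]
    _ ≤ ∑ k ∈ Finset.range n, μH[(1:ℝ)] (B k) := Finset.sum_le_sum fun k _ => hchord k
    _ ≤ _ := hsum

lemma arc_eq {a b : ℝ} (hab : a ≤ b) (hb : b - a ≤ π) :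
    μH[(1:ℝ)] (cpt '' Set.Icc a b) = ENNReal.ofReal (b - a) := by
  refine le_antisymm arc_upper ?_
  rcases eq_or_lt_of_le hab with rfl | hlt
  · simp
  set δ := b - a with hδ
  have hδ0 : 0 < δ := by simp only [hδ]; linarith
  -- the sequence n * (2 sin (δ/(2n))) tends to δ
  have hslope : Tendsto (fun x : ℝ => Real.sin x / x) (𝓝[≠] 0) (𝓝 1) := by
    have h := hasDerivAt_iff_tendsto_slope.mp (Real.hasDerivAt_sin 0)
    simp only [Real.cos_zero] at h
    convert h using 2 with x
    simp [slope_def_field]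
  have hx : Tendsto (fun n : ℕ => δ / (2 * (n:ℝ))) atTop (𝓝[≠] 0) := by
    apply tendsto_nhdsWithin_of_tendsto_nhds_of_eventually_within
    · have : (fun n : ℕ => δ / (2 * (n:ℝ))) = fun n : ℕ => (δ/2) / (n:ℝ) := by
        funext n; ring
      rw [this]
      exact tendsto_const_div_atTop_nhds_zero_nat _
    · filter_upwards [eventually_gt_atTop 0] with n hn
      have hn' : (0:ℝ) < n := by exact_mod_cast hn
      simp only [Set.mem_compl_iff, Set.mem_singleton_iff]
      positivity
  have hmain : Tendsto (fun n : ℕ => (n:ℝ) * (2 * Real.sin (δ/(2*(n:ℝ))))) atTop (𝓝 δ) := by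
    have h1 : Tendsto (fun n : ℕ => δ * (Real.sin (δ/(2*(n:ℝ))) / (δ/(2*(n:ℝ))))) atTop (𝓝 (δ * 1)) :=
      (hslope.comp hx).const_mul δ
    rw [mul_one] at h1
    apply h1.congr'
    filter_upwards [eventually_gt_atTop 0] with n hn
    have hn' : (0:ℝ) < n := by exact_mod_cast hn
    field_simp
  have hof : Tendsto (fun n : ℕ => ENNReal.ofReal ((n:ℝ) * (2 * Real.sin (δ/(2*(n:ℝ)))))) atTop
      (𝓝 (ENNReal.ofReal δ)) := (ENNReal.continuous_ofReal.tendsto _).comp hmain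
  apply le_of_tendsto hof
  filter_upwards [eventually_gt_atTop 0] with n hn
  exact arc_ge hab hb n hn

lemma norm_sq_eq (v : EuclideanSpace ℝ (Fin 2)) (hv : v ∈ sphere (0 : EuclideanSpace ℝ (Fin 2)) 1) :
    v 0 ^ 2 + v 1 ^ 2 = 1 := by
  rw [mem_sphere_zero_iff_norm] at hv
  have h := congrArg (· ^ 2) hv
  simp only [one_pow] at h
  rw [EuclideanSpace.norm_eq, Real.sq_sqrt (by positivity)] at h
  rw [← h, Fin.sum_univ_two]
  simp [Real.norm_eq_abs, sq_abs]

lemma cpt_mem_sphere (θ : ℝ) : cpt θ ∈ sphere (0 : EuclideanSpace ℝ (Fin 2)) 1 := by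
  rw [mem_sphere_zero_iff_norm, EuclideanSpace.norm_eq]
  rw [Fin.sum_univ_two]
  have : ‖cpt θ 0‖^2 + ‖cpt θ 1‖^2 = 1 := by
    simp only [Real.norm_eq_abs, sq_abs]
    show Real.cos θ ^2 + Real.sin θ ^2 = 1
    rw [add_comm]; exact Real.sin_sq_add_cos_sq θ
  rw [this, Real.sqrt_one]

lemma exists_rep (v : EuclideanSpace ℝ (Fin 2)) (hv : v ∈ sphere (0 : EuclideanSpace ℝ (Fin 2)) 1) :
    ∃ θ ∈ Set.Ioc (-π) π, cpt θ = v := by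
  have hπ := Real.pi_pos
  have h1 := norm_sq_eq v hv
  have hv0 : -1 ≤ v 0 ∧ v 0 ≤ 1 := by constructor <;> nlinarith [sq_nonneg (v 1)]
  set θ0 := Real.arccos (v 0) with hθ0
  have hcos : Real.cos θ0 = v 0 := Real.cos_arccos hv0.1 hv0.2
  have hsin : Real.sin θ0 = Real.sqrt (1 - v 0 ^ 2) := Real.sin_arccos (v 0)
  have habs : Real.sin θ0 = |v 1| := by
    rw [hsin, show 1 - v 0 ^2 = v 1 ^2 by linarith, Real.sqrt_sq_eq_abs]
  have hmem : 0 ≤ θ0 ∧ θ0 ≤ π := ⟨Real.arccos_nonneg _, Real.arccos_le_pi _⟩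
  rcases le_or_gt 0 (v 1) with h | h
  · refine ⟨θ0, ⟨by linarith [hmem.1], hmem.2⟩, ?_⟩
    have : Real.sin θ0 = v 1 := by rw [habs, abs_of_nonneg h]
    ext i
    fin_cases i
    · exact hcos
    · exact this
  · refine ⟨-θ0, ⟨?_, by linarith [hmem.1]⟩, ?_⟩
    · have : θ0 < π := by
        rcases eq_or_lt_of_le hmem.2 with he | hl
        · exfalso
          rw [he] at habs
          rw [Real.sin_pi] at habs
          have := abs_nonneg (v 1)
          have : |v 1| > 0 := abs_pos.mpr h.ne
          linarith
        · exact hl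
      linarith
    · ext i
      fin_cases i
      · show Real.cos (-θ0) = v 0
        rw [Real.cos_neg]; exact hcos
      · show Real.sin (-θ0) = v 1
        rw [Real.sin_neg, habs, abs_of_neg h]; ring

lemma sphere_eq : sphere (0 : EuclideanSpace ℝ (Fin 2)) 1 = cpt '' Set.Icc (-π) π := by
  apply Set.Subset.antisymm
  · intro v hv
    obtain ⟨θ, hθ, rfl⟩ := exists_rep v hv
    exact ⟨θ, ⟨hθ.1.le, hθ.2⟩, rfl⟩
  · rintro v ⟨θ, _, rfl⟩
    exact cpt_mem_sphere θ

lemma cond_iff {r v0 v1 : ℝ} (hr : 0 < r) :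
    (∀ x ∈ Set.Icc (-r) r, v0 * x + v1 < 0) ↔ (v0 * r + v1 < 0 ∧ v0 * (-r) + v1 < 0) := by
  constructor
  · intro h
    exact ⟨h r ⟨by linarith, le_rfl⟩, h (-r) ⟨le_rfl, by linarith⟩⟩
  · rintro ⟨h1, h2⟩ x ⟨hx1, hx2⟩
    have hb : v0 * x ≤ |v0| * r := by
      calc v0 * x ≤ |v0 * x| := le_abs_self _
        _ = |v0| * |x| := abs_mul _ _
        _ ≤ |v0| * r := by
            apply mul_le_mul_of_nonneg_left _ (abs_nonneg _)
            rw [abs_le]; exact ⟨hx1, hx2⟩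
    rcases abs_cases v0 with ⟨he, _⟩ | ⟨he, _⟩
    · rw [he] at hb; linarith
    · rw [he] at hb; linarith

lemma theta_iff {r θ : ℝ} (hr : 0 < r) (hθ : θ ∈ Set.Ioc (-π) π) :
    (Real.cos θ * r + Real.sin θ < 0 ∧ Real.cos θ * (-r) + Real.sin θ < 0) ↔
      (-π + Real.arctan r < θ ∧ θ < -Real.arctan r) := by
  have hπ := Real.pi_pos
  set φ := Real.arctan r with hφ
  have hφ0 : 0 < φ := by rw [hφ, ← Real.arctan_zero]; exact Real.arctan_strictMono hr
  have hφπ : φ < π / 2 := Real.arctan_lt_pi_div_two r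
  have htanφ : Real.tan φ = r := Real.tan_arctan r
  constructor
  · rintro ⟨hA, hB⟩
    have hsin : Real.sin θ < 0 := by linarith
    have hθ0 : θ < 0 := by
      by_contra hcon
      push_neg at hcon
      exact absurd (Real.sin_nonneg_of_nonneg_of_le_pi hcon hθ.2) (by linarith)
    constructor
    · by_contra hcon
      push_neg at hcon  -- θ ≤ -π + φ
      set ψ := θ + π with hψ
      have hψ1 : 0 < ψ := by simp only [hψ]; linarith [hθ.1]
      have hψ2 : ψ ≤ φ := by simp only [hψ]; linarith
      have hcosψ : 0 < Real.cos ψ :=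
        Real.cos_pos_of_mem_Ioo ⟨by linarith, by linarith⟩
      have htan : Real.tan ψ ≤ Real.tan φ := by
        rcases eq_or_lt_of_le hψ2 with he | hl
        · rw [he]
        · exact le_of_lt (Real.strictMonoOn_tan ⟨by linarith, by linarith⟩
            ⟨by linarith, by linarith⟩ hl)
      rw [htanφ, Real.tan_eq_sin_div_cos, div_le_iff₀ hcosψ] at htan
      have hsθ : Real.sin θ = -Real.sin ψ := by
        rw [show θ = ψ - π by simp [hψ], Real.sin_sub_pi]
      have hcθ : Real.cos θ = -Real.cos ψ := by
        rw [show θ = ψ - π by simp [hψ], Real.cos_sub_pi]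
      rw [hsθ, hcθ] at hB
      nlinarith
    · by_contra hcon
      push_neg at hcon  -- -φ ≤ θ
      have hcosθ : 0 < Real.cos θ :=
        Real.cos_pos_of_mem_Ioo ⟨by linarith, by linarith⟩
      have htan : Real.tan (-φ) ≤ Real.tan θ := by
        rcases eq_or_lt_of_le hcon with he | hl
        · rw [← he]
        · exact le_of_lt (Real.strictMonoOn_tan ⟨by linarith, by linarith⟩
            ⟨by linarith, by linarith⟩ hl)
      rw [Real.tan_neg, htanφ, Real.tan_eq_sin_div_cos, le_div_iff₀ hcosθ] at htan
      nlinarith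
  · rintro ⟨h1, h2⟩
    have hθ0 : θ < 0 := by linarith
    have hsin : Real.sin θ < 0 :=
      Real.sin_neg_of_neg_of_neg_pi_lt hθ0 (by linarith)
    rcases lt_or_ge (-(π/2)) θ with hg | hg
    · have hcosθ : 0 < Real.cos θ :=
        Real.cos_pos_of_mem_Ioo ⟨hg, by linarith⟩
      have htan : Real.tan θ < Real.tan (-φ) :=
        Real.strictMonoOn_tan ⟨by linarith, by linarith⟩ ⟨by linarith, by linarith⟩ h2
      rw [Real.tan_neg, htanφ, Real.tan_eq_sin_div_cos, div_lt_iff₀ hcosθ] at htan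
      constructor <;> nlinarith
    · set ψ := θ + π with hψ
      have hψ1 : φ < ψ := by simp only [hψ]; linarith
      have hψ2 : ψ ≤ π/2 := by simp only [hψ]; linarith
      have hsθ : Real.sin θ = -Real.sin ψ := by
        rw [show θ = ψ - π by simp [hψ], Real.sin_sub_pi]
      have hcθ : Real.cos θ = -Real.cos ψ := by
        rw [show θ = ψ - π by simp [hψ], Real.cos_sub_pi]
      have hsinψ : 0 < Real.sin ψ :=
        Real.sin_pos_of_pos_of_lt_pi (by linarith) (by linarith)
      have hcosψ : 0 ≤ Real.cos ψ :=
        Real.cos_nonneg_of_mem_Icc ⟨by linarith, hψ2⟩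
      have hkey : r * Real.cos ψ < Real.sin ψ := by
        rcases eq_or_lt_of_le hψ2 with he | hl
        · rw [he, Real.cos_pi_div_two, Real.sin_pi_div_two]; linarith
        · have hcosψ' : 0 < Real.cos ψ :=
            Real.cos_pos_of_mem_Ioo ⟨by linarith, hl⟩
          have htan : Real.tan φ < Real.tan ψ :=
            Real.strictMonoOn_tan ⟨by linarith, by linarith⟩ ⟨by linarith, by linarith⟩ hψ1
          rw [htanφ, Real.tan_eq_sin_div_cos, lt_div_iff₀ hcosψ'] at htan
          linarith
      rw [hsθ, hcθ] at *
      constructor <;> nlinarith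

lemma sphere_measure :
    μH[(1:ℝ)] (sphere (0 : EuclideanSpace ℝ (Fin 2)) 1) = ENNReal.ofReal (2 * π) := by
  have hπ := Real.pi_pos
  apply le_antisymm
  · rw [sphere_eq, show Set.Icc (-π) π = Set.Icc (-π) 0 ∪ Set.Icc 0 π from
      (Set.Icc_union_Icc_eq_Icc (by linarith) (by linarith)).symm, Set.image_union]
    calc μH[(1:ℝ)] (cpt '' Set.Icc (-π) 0 ∪ cpt '' Set.Icc 0 π)
        ≤ μH[(1:ℝ)] (cpt '' Set.Icc (-π) 0) + μH[(1:ℝ)] (cpt '' Set.Icc 0 π) :=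
          measure_union_le _ _
      _ = ENNReal.ofReal π + ENNReal.ofReal π := by
          rw [arc_eq (by linarith) (by linarith), arc_eq (by linarith) (by linarith)]
          norm_num
      _ = ENNReal.ofReal (2 * π) := by rw [← ENNReal.ofReal_add hπ.le hπ.le]; congr 1; ring
  · set B1 := cpt '' Set.Icc (-π) 0 \ {cpt 0} with hB1
    set B2 := cpt '' Set.Icc 0 π \ {cpt π} with hB2
    have hm1 : MeasurableSet B1 := (measurable_arc _ _).diff (measurableSet_singleton _)
    have hm2 : MeasurableSet B2 := (measurable_arc _ _).diff (measurableSet_singleton _)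
    have hdisj : Disjoint B1 B2 := by
      rw [Set.disjoint_left]
      rintro x ⟨⟨θ₁, hθ₁, rfl⟩, hx1⟩ ⟨⟨θ₂, hθ₂, h2⟩, hx2⟩
      rcases lt_or_ge |θ₂ - θ₁| (2 * π) with h | h
      · have heq : θ₂ = θ₁ := cpt_inj h2 h
        rw [heq] at hθ₂
        have : θ₁ = 0 := le_antisymm hθ₁.2 hθ₂.1
        exact hx1 (by rw [this]; rfl)
      · have habs : |θ₂ - θ₁| = θ₂ - θ₁ := abs_of_nonneg (by linarith [hθ₁.2, hθ₂.1])
        rw [habs] at h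
        have : θ₂ = π := by linarith [hθ₁.1, hθ₂.2]
        exact hx2 (by rw [← h2, this]; rfl)
    have hsub : B1 ∪ B2 ⊆ sphere (0 : EuclideanSpace ℝ (Fin 2)) 1 := by
      rintro x (hx | hx)
      · obtain ⟨⟨θ, _, rfl⟩, _⟩ := hx; exact cpt_mem_sphere θ
      · obtain ⟨⟨θ, _, rfl⟩, _⟩ := hx; exact cpt_mem_sphere θ
    calc ENNReal.ofReal (2 * π) = ENNReal.ofReal π + ENNReal.ofReal π := by
          rw [← ENNReal.ofReal_add hπ.le hπ.le]; congr 1; ring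
      _ = μH[(1:ℝ)] B1 + μH[(1:ℝ)] B2 := by
          rw [hB1, hB2, measure_diff_null (singleton_null _),
            measure_diff_null (singleton_null _), arc_eq (by linarith) (by linarith),
            arc_eq (by linarith) (by linarith)]
          norm_num
      _ = μH[(1:ℝ)] (B1 ∪ B2) := (measure_union hdisj hm2).symm
      _ ≤ _ := measure_mono hsub

lemma ioo_measure {a b : ℝ} (hab : a ≤ b) (hb : b - a ≤ π) :
    μH[(1:ℝ)] (cpt '' Set.Ioo a b) = ENNReal.ofReal (b - a) := by
  apply le_antisymm
  · rw [← arc_eq hab hb]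
    exact measure_mono (Set.image_mono Set.Ioo_subset_Icc_self)
  · have hsub : cpt '' Set.Icc a b ⊆ (cpt '' Set.Ioo a b ∪ {cpt a}) ∪ {cpt b} := by
      rintro x ⟨θ, hθ, rfl⟩
      rcases eq_or_lt_of_le hθ.1 with rfl | h1
      · exact Or.inl (Or.inr rfl)
      rcases eq_or_lt_of_le hθ.2 with rfl | h2
      · exact Or.inr rfl
      · exact Or.inl (Or.inl ⟨θ, ⟨h1, h2⟩, rfl⟩)
    calc ENNReal.ofReal (b - a) = μH[(1:ℝ)] (cpt '' Set.Icc a b) := (arc_eq hab hb).symm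
      _ ≤ μH[(1:ℝ)] ((cpt '' Set.Ioo a b ∪ {cpt a}) ∪ {cpt b}) := measure_mono hsub
      _ ≤ (μH[(1:ℝ)] (cpt '' Set.Ioo a b) + μH[(1:ℝ)] ({cpt a} : Set _)) + μH[(1:ℝ)] ({cpt b} : Set _) :=
          le_trans (measure_union_le _ _) (by gcongr; exact measure_union_le _ _)
      _ = μH[(1:ℝ)] (cpt '' Set.Ioo a b) := by
          rw [singleton_null, singleton_null, add_zero, add_zero]

theorem born_dead_probability_dim_one (r : ℝ) (hr : 0 < r) :
    μH[(1 : ℝ)] {v : EuclideanSpace ℝ (Fin 2) |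
        v ∈ sphere (0 : EuclideanSpace ℝ (Fin 2)) 1 ∧
        ∀ x : ℝ, x ∈ Set.Icc (-r) r → v 0 * x + v 1 < 0}
      / μH[(1 : ℝ)] (sphere (0 : EuclideanSpace ℝ (Fin 2)) 1)
    = ENNReal.ofReal (Real.arctan (1 / r) / π) := by
  have hπ := Real.pi_pos
  set φ := Real.arctan r with hφ
  have hφ0 : 0 < φ := by rw [hφ, ← Real.arctan_zero]; exact Real.arctan_strictMono hr
  have hφπ : φ < π / 2 := Real.arctan_lt_pi_div_two r
  have hSet : {v : EuclideanSpace ℝ (Fin 2) |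
      v ∈ sphere (0 : EuclideanSpace ℝ (Fin 2)) 1 ∧
      ∀ x : ℝ, x ∈ Set.Icc (-r) r → v 0 * x + v 1 < 0} = cpt '' Set.Ioo (-π + φ) (-φ) := by
    apply Set.Subset.antisymm
    · rintro v ⟨hv, hcond⟩
      obtain ⟨θ, hθ, rfl⟩ := exists_rep v hv
      have h2 := (cond_iff hr).mp hcond
      rw [cpt_zero, cpt_one] at h2
      have h3 := (theta_iff hr hθ).mp h2
      exact ⟨θ, h3, rfl⟩
    · rintro v ⟨θ, hθ, rfl⟩
      have hθ' : θ ∈ Set.Ioc (-π) π := ⟨by linarith [hθ.1], by linarith [hθ.2]⟩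
      refine ⟨cpt_mem_sphere θ, ?_⟩
      have h2 := (theta_iff hr hθ').mpr hθ
      intro x hx
      rw [cpt_zero, cpt_one]
      exact (cond_iff hr).mpr h2 x hx
  rw [hSet, ioo_measure (by linarith) (by linarith), sphere_measure]
  have harc : Real.arctan (1 / r) = π / 2 - φ := by
    rw [one_div, Real.arctan_inv_of_pos hr]
  rw [harc, ← ENNReal.ofReal_div_of_pos (by linarith)]
  congr 1
  have h1 : -φ - (-π + φ) = π - 2 * φ := by ring
  rw [h1]
  field_simp
end
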